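/- The feasible region X of the two-system joint energy and spectrum cooperation problem (P1) is a convex set. -/

import Mathlib

/-- Decision vector of problem (P1): `(E, G, e, w, p, b)` where `E G e w : Fin 2 → ℝ`
are the per-system renewable energy, grid energy, shared energy and shared bandwidth,
and `p b : ι → ℝ` are the per-user power and bandwidth allocations. -/
abbrev P1Vec (ι : Type*) :=
  (Fin 2 → ℝ) × (Fin 2 → ℝ) × (Fin 2 → ℝ) × (Fin 2 → ℝ) × (ι → ℝ) × (ι → ℝ)

/-- Feasibility (membership in the region `X`) for problem (P1). -/
def P1Feasible {ι : Type*} [DecidableEq ι] (K : Fin 2 → Finset ι) (g r : ι → ℝ)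
    (W Pc Ebar : Fin 2 → ℝ) (N₀ βE βB : ℝ) (x : P1Vec ι) : Prop :=
  match x with
  | (E, G, e, w, p, b) =>
    (∀ i, 0 ≤ E i) ∧ (∀ i, 0 ≤ G i) ∧ (∀ i, 0 ≤ e i) ∧ (∀ i, 0 ≤ w i) ∧
    (∀ k ∈ K 0 ∪ K 1, 0 ≤ p k) ∧ (∀ k ∈ K 0 ∪ K 1, 0 < b k) ∧
    (∀ i, (∑ k ∈ K i, p k) + Pc i ≤ E i + G i + βE * e (1 - i) - e i) ∧
    (∀ i, (∑ k ∈ K i, b k) ≤ W i + βB * w (1 - i) - w i) ∧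
    (∀ i, E i ≤ Ebar i) ∧
    (∀ i, ∀ k ∈ K i, r k ≤ b k * Real.logb 2 (1 + g k * p k / (b k * N₀)))

lemma comb_pos {a m b1 b2 : ℝ} (ha : 0 ≤ a) (hm : 0 ≤ m) (hs : a + m = 1)
    (hb1 : 0 < b1) (hb2 : 0 < b2) : 0 < a * b1 + m * b2 := by
  rcases eq_or_lt_of_le ha with h | h
  · have hm1 : m = 1 := by linarith
    rw [← h, hm1]; simpa using hb2
  · have h1 : 0 < a * b1 := mul_pos h hb1
    nlinarith [mul_nonneg hm hb2.le]

lemma persp_logb {c N p1 p2 b1 b2 a m : ℝ} (hc : 0 ≤ c) (hN : 0 < N)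
    (hp1 : 0 ≤ p1) (hp2 : 0 ≤ p2) (hb1 : 0 < b1) (hb2 : 0 < b2)
    (ha : 0 ≤ a) (hm : 0 ≤ m) (hs : a + m = 1) :
    a * (b1 * Real.logb 2 (1 + c * p1 / (b1 * N))) +
      m * (b2 * Real.logb 2 (1 + c * p2 / (b2 * N)))
      ≤ (a * b1 + m * b2) *
        Real.logb 2 (1 + c * (a * p1 + m * p2) / ((a * b1 + m * b2) * N)) := by
  rcases eq_or_lt_of_le ha with h | hapos
  · have hm1 : m = 1 := by linarith
    rw [← h, hm1]; simp
  rcases eq_or_lt_of_le hm with h | hmpos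
  · have ha1 : a = 1 := by linarith
    rw [← h, ha1]; simp
  -- main case
  have hlog2 : (0:ℝ) < Real.log 2 := Real.log_pos (by norm_num)
  set w1 := a * b1 with hw1
  set w2 := m * b2 with hw2
  have hw1p : 0 < w1 := mul_pos hapos hb1
  have hw2p : 0 < w2 := mul_pos hmpos hb2
  set s := w1 + w2 with hsdef
  have hsp : 0 < s := by positivity
  set x1 := 1 + c * p1 / (b1 * N) with hx1
  set x2 := 1 + c * p2 / (b2 * N) with hx2
  have hx1p : (0:ℝ) < x1 := by
    rw [hx1]; have : 0 ≤ c * p1 / (b1 * N) := by positivity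
    linarith
  have hx2p : (0:ℝ) < x2 := by
    rw [hx2]; have : 0 ≤ c * p2 / (b2 * N) := by positivity
    linarith
  have hj := strictConcaveOn_log_Ioi.concaveOn.2 (Set.mem_Ioi.2 hx1p) (Set.mem_Ioi.2 hx2p)
    (by positivity : (0:ℝ) ≤ w1 / s) (by positivity : (0:ℝ) ≤ w2 / s)
    (by field_simp; exact hsdef.symm)
  simp only [smul_eq_mul] at hj
  have harg : w1 / s * x1 + w2 / s * x2 = 1 + c * (a * p1 + m * p2) / (s * N) := by
    rw [hx1, hx2, hw1, hw2, hsdef, hw1, hw2]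
    field_simp
    ring
  rw [harg] at hj
  have hkey : w1 * Real.log x1 + w2 * Real.log x2
      ≤ s * Real.log (1 + c * (a * p1 + m * p2) / (s * N)) := by
    have := mul_le_mul_of_nonneg_left hj hsp.le
    calc w1 * Real.log x1 + w2 * Real.log x2
        = s * (w1 / s * Real.log x1 + w2 / s * Real.log x2) := by field_simp
      _ ≤ _ := this
  simp only [Real.logb]
  calc a * (b1 * (Real.log x1 / Real.log 2)) + m * (b2 * (Real.log x2 / Real.log 2))
      = (w1 * Real.log x1 + w2 * Real.log x2) / Real.log 2 := by rw [hw1, hw2]; ring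
    _ ≤ s * Real.log (1 + c * (a * p1 + m * p2) / (s * N)) / Real.log 2 := by gcongr
    _ = s * (Real.log (1 + c * (a * p1 + m * p2) / (s * N)) / Real.log 2) := by ring

theorem P1_feasible_region_convex' {ι : Type*} [DecidableEq ι] (K : Fin 2 → Finset ι)
    (g r : ι → ℝ) (hg : ∀ k ∈ K 0 ∪ K 1, 0 < g k)
    (W Pc Ebar : Fin 2 → ℝ)
    (N₀ βE βB : ℝ) (hN₀ : 0 < N₀) :
    Convex ℝ {x : ((Fin 2 → ℝ) × (Fin 2 → ℝ) × (Fin 2 → ℝ) × (Fin 2 → ℝ) × (ι → ℝ) × (ι → ℝ)) |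
      (∀ i, 0 ≤ x.1 i) ∧ (∀ i, 0 ≤ x.2.1 i) ∧ (∀ i, 0 ≤ x.2.2.1 i) ∧ (∀ i, 0 ≤ x.2.2.2.1 i) ∧
      (∀ k ∈ K 0 ∪ K 1, 0 ≤ x.2.2.2.2.1 k) ∧ (∀ k ∈ K 0 ∪ K 1, 0 < x.2.2.2.2.2 k) ∧
      (∀ i, (∑ k ∈ K i, x.2.2.2.2.1 k) + Pc i ≤ x.1 i + x.2.1 i + βE * x.2.2.1 (1 - i) - x.2.2.1 i) ∧
      (∀ i, (∑ k ∈ K i, x.2.2.2.2.2 k) ≤ W i + βB * x.2.2.2.1 (1 - i) - x.2.2.2.1 i) ∧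
      (∀ i, x.1 i ≤ Ebar i) ∧
      (∀ i, ∀ k ∈ K i, r k ≤ x.2.2.2.2.2 k * Real.logb 2 (1 + g k * x.2.2.2.2.1 k / (x.2.2.2.2.2 k * N₀)))} := by
  intro x hx y hy a m ha hm hab
  obtain ⟨hE1, hG1, he1, hw1, hp1, hb1, hpw1, hbw1, hEb1, hq1⟩ := hx
  obtain ⟨hE2, hG2, he2, hw2, hp2, hb2, hpw2, hbw2, hEb2, hq2⟩ := hy
  simp only [Set.mem_setOf_eq, Prod.fst_add, Prod.snd_add, Prod.smul_fst, Prod.smul_snd,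
    Pi.add_apply, Pi.smul_apply, smul_eq_mul] at *
  refine ⟨fun i => by nlinarith [hE1 i, hE2 i, mul_nonneg ha (hE1 i), mul_nonneg hm (hE2 i)],
    fun i => by nlinarith [mul_nonneg ha (hG1 i), mul_nonneg hm (hG2 i)],
    fun i => by nlinarith [mul_nonneg ha (he1 i), mul_nonneg hm (he2 i)],
    fun i => by nlinarith [mul_nonneg ha (hw1 i), mul_nonneg hm (hw2 i)],
    fun k hk => by nlinarith [mul_nonneg ha (hp1 k hk), mul_nonneg hm (hp2 k hk)],
    fun k hk => comb_pos ha hm hab (hb1 k hk) (hb2 k hk),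
    ?_, ?_, fun i => by
      have hc : a * Ebar i + m * Ebar i = Ebar i := by rw [← add_mul, hab, one_mul]
      linarith [mul_le_mul_of_nonneg_left (hEb1 i) ha, mul_le_mul_of_nonneg_left (hEb2 i) hm], ?_⟩
  · intro i
    have h1 := hpw1 i; have h2 := hpw2 i
    have hsum : (∑ k ∈ K i, (a * x.2.2.2.2.1 k + m * y.2.2.2.2.1 k))
        = a * (∑ k ∈ K i, x.2.2.2.2.1 k) + m * (∑ k ∈ K i, y.2.2.2.2.1 k) := by
      rw [Finset.sum_add_distrib, Finset.mul_sum, Finset.mul_sum]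
    rw [hsum]
    have hc : a * Pc i + m * Pc i = Pc i := by rw [← add_mul, hab, one_mul]
    nlinarith [mul_le_mul_of_nonneg_left h1 ha, mul_le_mul_of_nonneg_left h2 hm]
  · intro i
    have h1 := hbw1 i; have h2 := hbw2 i
    have hsum : (∑ k ∈ K i, (a * x.2.2.2.2.2 k + m * y.2.2.2.2.2 k))
        = a * (∑ k ∈ K i, x.2.2.2.2.2 k) + m * (∑ k ∈ K i, y.2.2.2.2.2 k) := by
      rw [Finset.sum_add_distrib, Finset.mul_sum, Finset.mul_sum]
    rw [hsum]
    have hc : a * W i + m * W i = W i := by rw [← add_mul, hab, one_mul]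
    nlinarith [mul_le_mul_of_nonneg_left h1 ha, mul_le_mul_of_nonneg_left h2 hm]
  · intro i k hk
    have hku : k ∈ K 0 ∪ K 1 := by
      rcases (by omega : i = 0 ∨ i = 1) with h | h <;> subst h <;>
        [exact Finset.mem_union_left _ hk; exact Finset.mem_union_right _ hk]
    have hkey := persp_logb (c := g k) (N := N₀) (hg k hku).le hN₀ (hp1 k hku) (hp2 k hku)
      (hb1 k hku) (hb2 k hku) ha hm hab
    have hr1 := hq1 i k hk; have hr2 := hq2 i k hk
    have : r k = a * r k + m * r k := by rw [← add_mul, hab, one_mul]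
    rw [this]
    exact le_trans (add_le_add (mul_le_mul_of_nonneg_left hr1 ha)
      (mul_le_mul_of_nonneg_left hr2 hm)) hkey

/-- The feasible region `X` of problem (P1) is a convex set. -/
theorem P1_feasible_region_convex {ι : Type*} [DecidableEq ι] (K : Fin 2 → Finset ι)
    (hK : ∀ i, (K i).Nonempty) (hdisj : Disjoint (K 0) (K 1))
    (g r : ι → ℝ) (hg : ∀ k ∈ K 0 ∪ K 1, 0 < g k) (hr : ∀ k ∈ K 0 ∪ K 1, 0 < r k)
    (W Pc Ebar αE αG : Fin 2 → ℝ)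
    (hW : ∀ i, 0 < W i) (hPc : ∀ i, 0 ≤ Pc i) (hEbar : ∀ i, 0 ≤ Ebar i)
    (hαE : ∀ i, 0 < αE i) (hα : ∀ i, αE i < αG i)
    (N₀ βE βB : ℝ) (hN₀ : 0 < N₀) (hβE : βE ∈ Set.Icc (0 : ℝ) 1)
    (hβB : βB = 0 ∨ βB = 1) :
    Convex ℝ {x : P1Vec ι | P1Feasible K g r W Pc Ebar N₀ βE βB x} := by
  have h := P1_feasible_region_convex' K g r hg W Pc Ebar N₀ βE βB hN₀
  have hset : {x : P1Vec ι | P1Feasible K g r W Pc Ebar N₀ βE βB x} =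
      {x : ((Fin 2 → ℝ) × (Fin 2 → ℝ) × (Fin 2 → ℝ) × (Fin 2 → ℝ) × (ι → ℝ) × (ι → ℝ)) |
      (∀ i, 0 ≤ x.1 i) ∧ (∀ i, 0 ≤ x.2.1 i) ∧ (∀ i, 0 ≤ x.2.2.1 i) ∧ (∀ i, 0 ≤ x.2.2.2.1 i) ∧
      (∀ k ∈ K 0 ∪ K 1, 0 ≤ x.2.2.2.2.1 k) ∧ (∀ k ∈ K 0 ∪ K 1, 0 < x.2.2.2.2.2 k) ∧
      (∀ i, (∑ k ∈ K i, x.2.2.2.2.1 k) + Pc i ≤ x.1 i + x.2.1 i + βE * x.2.2.1 (1 - i) - x.2.2.1 i) ∧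
      (∀ i, (∑ k ∈ K i, x.2.2.2.2.2 k) ≤ W i + βB * x.2.2.2.1 (1 - i) - x.2.2.2.1 i) ∧
      (∀ i, x.1 i ≤ Ebar i) ∧
      (∀ i, ∀ k ∈ K i, r k ≤ x.2.2.2.2.2 k * Real.logb 2 (1 + g k * x.2.2.2.2.1 k / (x.2.2.2.2.2 k * N₀)))} := by
    ext ⟨E, G, e, w, p, b⟩
    rfl
  rw [hset]
  exact h
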